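/- Let 1/2 < b < 1 and 0 < c < 1/2 with b - c > 1/4. Then the double sum Σ_{k∈ℤ} Σ_{k'∈ℤ} 1/(⟨k⟩^{2(b-c)} · ⟨k'⟩^{2(b-c)} · ⟨k-k'⟩^{2b}) is finite. -/

import Mathlib

/-- The Japanese bracket `⟨x⟩ = (1 + x²)^{1/2}`. -/
noncomputable def jb (x : ℝ) : ℝ := Real.sqrt (1 + x ^ 2)

lemma jb_one_le (x : ℝ) : 1 ≤ jb x := by
  have := Real.sqrt_le_sqrt (show (1:ℝ) ≤ 1 + x^2 by nlinarith [sq_nonneg x])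
  simpa [jb] using this

lemma jb_pos (x : ℝ) : 0 < jb x := lt_of_lt_of_le one_pos (jb_one_le x)

lemma jb_abs_le (x : ℝ) : |x| ≤ jb x := by
  rw [jb, ← Real.sqrt_sq_eq_abs]
  exact Real.sqrt_le_sqrt (by nlinarith)

lemma jb_half (x y : ℝ) (h : |x| ≤ 2 * |y|) : jb x ≤ 2 * jb y := by
  have hx2 : x^2 ≤ 4*y^2 := by nlinarith [sq_abs x, sq_abs y, abs_nonneg x, abs_nonneg y]
  have hA := Real.sq_sqrt (show (0:ℝ) ≤ 1 + x^2 by positivity)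
  have hB := Real.sq_sqrt (show (0:ℝ) ≤ 1 + y^2 by positivity)
  have hA0 := Real.sqrt_nonneg (1 + x^2)
  have hB0 := Real.sqrt_nonneg (1 + y^2)
  rw [jb, jb]
  nlinarith [sq_nonneg (Real.sqrt (1+x^2) - 2*Real.sqrt (1+y^2)),
    sq_nonneg (Real.sqrt (1+x^2) + 2*Real.sqrt (1+y^2))]

lemma summable_jb (p : ℝ) (hp : 1 < p) : Summable (fun n : ℤ => 1 / jb (n : ℝ) ^ p) := by
  apply Summable.of_norm_bounded_eventually (g := fun n : ℤ => 1 / |(n:ℝ) + 0| ^ p)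
    ((Real.summable_one_div_int_add_rpow 0 p).mpr hp)
  have : {n : ℤ | ¬ ‖1 / jb (n:ℝ) ^ p‖ ≤ 1 / |(n:ℝ) + 0| ^ p} ⊆ {0} := by
    intro n hn
    simp only [Set.mem_setOf_eq, not_le] at hn
    by_contra h0
    apply absurd hn
    push_neg
    have h1 : (1:ℝ) ≤ |(n:ℝ)| := by
      rw [← Int.cast_abs]; exact_mod_cast Int.one_le_abs (by simpa using h0)
    rw [Real.norm_eq_abs,
      abs_of_nonneg (one_div_pos.mpr (Real.rpow_pos_of_pos (jb_pos _) p)).le, add_zero]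
    apply one_div_le_one_div_of_le (Real.rpow_pos_of_pos (by linarith) p)
    exact Real.rpow_le_rpow (by positivity) (jb_abs_le _) (by linarith)
  exact Filter.eventually_cofinite.mpr (Set.Finite.subset (Set.finite_singleton 0) this)

/-- The key elementary pointwise inequality: if `K ≤ 2K'` or `K ≤ 2M`, then
`1/(K^a K'^a M^{a+c}) ≤ 2^a (K^{-2a} K'^{-(a+c)} + 2 K^{-2a} M^{-(a+c)})`. -/
lemma key_ineq (a c2 : ℝ) (ha : 0 < a) (hc : 0 < c2) (K K' M : ℝ)
    (hK : 1 ≤ K) (hK' : 1 ≤ K') (hM : 1 ≤ M) (hcase : K ≤ 2*K' ∨ K ≤ 2*M) :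
    1 / (K ^ a * K' ^ a * M ^ (a + c2)) ≤
      2 ^ a * (1 / K ^ (2*a) * (1 / K' ^ (a + c2)) +
        2 * (1 / K ^ (2*a) * (1 / M ^ (a + c2)))) := by
  have hK0 : (0:ℝ) < K := by linarith
  have hK'0 : (0:ℝ) < K' := by linarith
  have hM0 : (0:ℝ) < M := by linarith
  have pKa : 0 < K ^ a := Real.rpow_pos_of_pos hK0 a
  have pK2a : 0 < K ^ (2*a) := Real.rpow_pos_of_pos hK0 _
  have pK'a : 0 < K' ^ a := Real.rpow_pos_of_pos hK'0 a
  have pK'c : 0 < K' ^ c2 := Real.rpow_pos_of_pos hK'0 c2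
  have pK't : 0 < K' ^ (a + c2) := Real.rpow_pos_of_pos hK'0 _
  have pMt : 0 < M ^ (a + c2) := Real.rpow_pos_of_pos hM0 _
  have pMa : 0 < M ^ a := Real.rpow_pos_of_pos hM0 a
  have pMc : 0 < M ^ c2 := Real.rpow_pos_of_pos hM0 c2
  have p2a : (0:ℝ) < 2 ^ a := Real.rpow_pos_of_pos two_pos a
  have hK2a : K ^ (2*a) = K ^ a * K ^ a := by rw [two_mul, Real.rpow_add hK0]
  have hMt : M ^ (a + c2) = M ^ a * M ^ c2 := Real.rpow_add hM0 _ _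
  have hD : 0 < K ^ a * K' ^ a * M ^ (a+c2) := by positivity
  have main : K ^ (2*a) * K' ^ (a+c2) ≤ 2 ^ a * (K ^ a * K' ^ a * M ^ (a+c2)) ∨
      K ^ (2*a) * M ^ (a+c2) ≤ 2 ^ a * (K ^ a * K' ^ a * M ^ (a+c2)) := by
    rcases hcase with hA | hB
    · right
      have h1 : K ^ a ≤ (2*K') ^ a := Real.rpow_le_rpow hK0.le hA ha.le
      rw [Real.mul_rpow two_pos.le hK'0.le] at h1
      rw [hK2a]
      nlinarith [mul_le_mul_of_nonneg_right h1 (mul_nonneg pKa.le pMt.le)]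
    · have h1 : K ^ a ≤ (2*M) ^ a := Real.rpow_le_rpow hK0.le hB ha.le
      rw [Real.mul_rpow two_pos.le hM0.le] at h1
      rcases le_total K' M with hsub | hsub
      · left
        have h2 : K' ^ c2 ≤ M ^ c2 := Real.rpow_le_rpow hK'0.le hsub hc.le
        have hK't : K' ^ (a + c2) = K' ^ a * K' ^ c2 := Real.rpow_add hK'0 _ _
        rw [hK2a, hK't, hMt]
        nlinarith [mul_le_mul_of_nonneg_left
          (mul_le_mul h1 h2 pK'c.le (by positivity)) (mul_nonneg pKa.le pK'a.le)]
      · right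
        have h2 : M ^ a ≤ K' ^ a := Real.rpow_le_rpow hM0.le hsub ha.le
        have h3 : K ^ a ≤ 2 ^ a * K' ^ a :=
          le_trans h1 (mul_le_mul_of_nonneg_left h2 p2a.le)
        rw [hK2a]
        nlinarith [mul_le_mul_of_nonneg_right h3 (mul_nonneg pKa.le pMt.le)]
  have final : ∀ X : ℝ, 0 < X →
      K ^ (2*a) * X ≤ 2 ^ a * (K ^ a * K' ^ a * M ^ (a+c2)) →
      1 / (K ^ a * K' ^ a * M ^ (a+c2)) ≤ 2 ^ a * (1 / K ^ (2*a) * (1 / X)) := by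
    intro X hX h
    have : (1:ℝ) / (K ^ a * K' ^ a * M ^ (a+c2)) ≤ 2 ^ a / (K ^ (2*a) * X) := by
      rw [div_le_div_iff₀ hD (by positivity)]
      linarith
    calc 1 / (K ^ a * K' ^ a * M ^ (a+c2)) ≤ 2 ^ a / (K ^ (2*a) * X) := this
      _ = 2 ^ a * (1 / K ^ (2*a) * (1 / X)) := by field_simp
  rcases main with h | h
  · refine le_trans (final _ pK't h) ?_
    have h2 : (0:ℝ) ≤ 2 ^ a * (2 * (1 / K ^ (2*a) * (1 / M ^ (a+c2)))) := by positivity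
    nlinarith
  · refine le_trans (final _ pMt h) ?_
    have h1 : (0:ℝ) ≤ 2 ^ a * (1 / K ^ (2*a) * (1 / K' ^ (a+c2))) := by positivity
    have h2 : (0:ℝ) ≤ 2 ^ a * (1 / K ^ (2*a) * (1 / M ^ (a+c2))) := by positivity
    nlinarith

/-- The shear `(k, k') ↦ (k, k - k')`, an involutive equivalence of `ℤ × ℤ`. -/
def shearEquiv : ℤ × ℤ ≃ ℤ × ℤ where
  toFun p := (p.1, p.1 - p.2)
  invFun p := (p.1, p.1 - p.2)
  left_inv p := by simp
  right_inv p := by simp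

set_option maxHeartbeats 1000000 in
/-- Finiteness of the double sum appearing in the control of the localized random
operator: for `1/2 < b < 1` and `0 < c < 1/2` with `b - c > 1/4`,
`∑_{k,k'∈ℤ} ⟨k⟩^{-2(b-c)} ⟨k'⟩^{-2(b-c)} ⟨k-k'⟩^{-2b} < ∞`. -/
theorem double_sum_finite (b c : ℝ) (hb0 : 1 / 2 < b) (hb1 : b < 1)
    (hc0 : 0 < c) (hc1 : c < 1 / 2) (hbc : 1 / 4 < b - c) :
    Summable (fun p : ℤ × ℤ =>
      1 / (jb (p.1 : ℝ) ^ (2 * (b - c)) * jb (p.2 : ℝ) ^ (2 * (b - c)) *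
        jb ((p.1 : ℝ) - (p.2 : ℝ)) ^ (2 * b))) := by
  set a := 2 * (b - c) with ha_def
  have ha : 0 < a := by simp only [ha_def]; linarith
  have hc2 : 0 < 2 * c := by linarith
  have hsum : a + 2 * c = 2 * b := by ring
  have h2a : 1 < 2 * a := by simp only [ha_def]; linarith
  have ht : 1 < 2 * b := by linarith
  -- the summable majorant
  set G : ℤ × ℤ → ℝ := fun p =>
    2 ^ a * (1 / jb (p.1 : ℝ) ^ (2*a) * (1 / jb (p.2 : ℝ) ^ (2 * b)) +
      2 * (1 / jb (p.1 : ℝ) ^ (2*a) * (1 / jb ((p.1 : ℝ) - (p.2 : ℝ)) ^ (2 * b)))) with hG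
  have hg : Summable (fun p : ℤ × ℤ => 1 / jb (p.1 : ℝ) ^ (2*a) * (1 / jb (p.2 : ℝ) ^ (2*b))) :=
    Summable.mul_of_nonneg (summable_jb _ h2a) (summable_jb _ ht)
      (fun n => (one_div_pos.mpr (Real.rpow_pos_of_pos (jb_pos _) _)).le)
      (fun n => (one_div_pos.mpr (Real.rpow_pos_of_pos (jb_pos _) _)).le)
  have hh : Summable (fun p : ℤ × ℤ =>
      1 / jb (p.1 : ℝ) ^ (2*a) * (1 / jb ((p.1 : ℝ) - (p.2 : ℝ)) ^ (2*b))) := by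
    have := (shearEquiv.summable_iff (f := fun p : ℤ × ℤ =>
      1 / jb (p.1 : ℝ) ^ (2*a) * (1 / jb (p.2 : ℝ) ^ (2*b)))).mpr hg
    refine this.congr fun p => ?_
    simp only [shearEquiv, Equiv.coe_fn_mk, Function.comp_apply]
    push_cast
    ring_nf
  have hGsum : Summable G := by
    rw [hG]
    exact ((hg.add (hh.mul_left 2)).mul_left _)
  apply Summable.of_nonneg_of_le (f := G)
  · intro p
    apply le_of_lt
    apply one_div_pos.mpr
    exact mul_pos (mul_pos (Real.rpow_pos_of_pos (jb_pos _) _)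
      (Real.rpow_pos_of_pos (jb_pos _) _)) (Real.rpow_pos_of_pos (jb_pos _) _)
  · intro p
    have hcase : jb (p.1 : ℝ) ≤ 2 * jb (p.2 : ℝ) ∨
        jb (p.1 : ℝ) ≤ 2 * jb ((p.1 : ℝ) - p.2) := by
      rcases le_or_gt |(p.1 : ℝ)| (2 * |(p.2 : ℝ)|) with h | h
      · exact Or.inl (jb_half _ _ h)
      · refine Or.inr (jb_half _ _ ?_)
        have := abs_sub_abs_le_abs_sub (p.1 : ℝ) (p.2 : ℝ)
        linarith
    have key := key_ineq a (2*c) ha hc2 (jb (p.1 : ℝ)) (jb (p.2 : ℝ))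
      (jb ((p.1 : ℝ) - p.2)) (jb_one_le _) (jb_one_le _) (jb_one_le _) hcase
    rw [hsum] at key
    exact key
  · exact hGsum
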